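/- Let X and Y be Banach spaces, F : X → Set Y a set-valued mapping, q ≥ 1, and g : X → Y continuously differentiable on a neighborhood of x̄ with derivative ∇g. Assume the mapping G : x ↦ g(x̄) + ∇g(x̄)(x − x̄) + F(x) is strongly metrically q-subregular at (x̄, ȳ) with modulus κ > 0, where ȳ ∈ G(x̄). Then for every λ > κ there exist γ > 0 and η > 0 such that for every parameter u in the closed ball B(x̄, γ), every x in the closed ball B(x̄, η), and every z ∈ g(x̄) + ∇g(u)(x − x̄) + F(x), one has ‖x − x̄‖ ≤ λ·‖z − ȳ‖^q. -/

import Mathlib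

open Metric

lemma rpow_add_le_aux {a b ρ q : ℝ} (ha : 0 ≤ a) (hb : 0 ≤ b) (hρ : 1 < ρ) (hq : 0 ≤ q) :
    (a + b) ^ q ≤ ρ ^ q * a ^ q + (ρ / (ρ - 1)) ^ q * b ^ q := by
  have hρ0 : 0 < ρ := by linarith
  have hρ10 : 0 < ρ - 1 := by linarith
  rcases le_or_gt b ((ρ - 1) * a) with h | h
  · have h1 : a + b ≤ ρ * a := by nlinarith
    calc (a + b) ^ q ≤ (ρ * a) ^ q := Real.rpow_le_rpow (by positivity) h1 hq
      _ = ρ ^ q * a ^ q := Real.mul_rpow hρ0.le ha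
      _ ≤ _ := le_add_of_nonneg_right (by positivity)
  · have h1 : a + b ≤ (ρ / (ρ - 1)) * b := by
      rw [div_mul_eq_mul_div, le_div_iff₀ hρ10]; nlinarith
    calc (a + b) ^ q ≤ ((ρ / (ρ - 1)) * b) ^ q := Real.rpow_le_rpow (by positivity) h1 hq
      _ = (ρ / (ρ - 1)) ^ q * b ^ q := Real.mul_rpow (by positivity) hb
      _ ≤ _ := le_add_of_nonneg_left (by positivity)


/-- strong metric q-subregularity of the partial linearization
`G : x ↦ g(x̄) + ∇g(x̄)(x - x̄) + F(x)` with modulus `κ` propagates, with any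
modulus `λ > κ`, to the parameterized mappings
`x ↦ g(x̄) + ∇g(u)(x - x̄) + F(x)` uniformly in `u` near `x̄`. -/
theorem strong_q_subregularity_parameterized
    {X Y : Type*} [NormedAddCommGroup X] [NormedSpace ℝ X] [CompleteSpace X]
    [NormedAddCommGroup Y] [NormedSpace ℝ Y] [CompleteSpace Y]
    (F : X → Set Y) (q : ℝ) (hq : 1 ≤ q)
    (g : X → Y) (g' : X → X →L[ℝ] Y) (xb : X) (δ : ℝ) (hδ : 0 < δ)
    (hderiv : ∀ x ∈ ball xb δ, HasFDerivAt g (g' x) x)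
    (hcont : ContinuousOn g' (ball xb δ))
    (yb : Y) (hyb : yb ∈ (fun w => g xb + (g' xb) (xb - xb) + w) '' F xb)
    (κ : ℝ) (hκ : 0 < κ)
    (hG : ∃ γ₀ > (0 : ℝ), ∀ x ∈ closedBall xb γ₀, ∀ w ∈ F x,
      ‖x - xb‖ ≤ κ * ‖g xb + (g' xb) (x - xb) + w - yb‖ ^ q) :
    ∀ lam : ℝ, κ < lam →
      ∃ γ > (0 : ℝ), ∃ η > (0 : ℝ), ∀ u ∈ closedBall xb γ, ∀ x ∈ closedBall xb η,
        ∀ w ∈ F x, ‖x - xb‖ ≤ lam * ‖g xb + (g' u) (x - xb) + w - yb‖ ^ q := by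
  intro lam hlam
  obtain ⟨γ₀, hγ₀, hsub⟩ := hG
  have hq0 : (0 : ℝ) < q := lt_of_lt_of_le one_pos hq
  set r : ℝ := lam / κ with hr_def
  have hr : 1 < r := (one_lt_div hκ).mpr hlam
  set ρ : ℝ := ((1 + r) / 2) ^ (1 / q) with hρ_def
  have hbase : (1 : ℝ) < (1 + r) / 2 := by linarith
  have hρq : ρ ^ q = (1 + r) / 2 := by
    rw [hρ_def, ← Real.rpow_mul (by linarith : (0:ℝ) ≤ (1 + r) / 2), one_div_mul_cancel hq0.ne', Real.rpow_one]
  have hρ1 : 1 < ρ := by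
    rw [hρ_def]
    exact Real.one_lt_rpow_iff_of_pos (by linarith) |>.mpr (Or.inl ⟨hbase, by positivity⟩)
  have hρ0 : 0 < ρ := by linarith
  have hρ10 : 0 < ρ - 1 := by linarith
  set E : ℝ := (r - 1) / (2 * r * κ) * ((ρ - 1) / ρ) ^ q with hE_def
  have hE : 0 < E := by
    apply mul_pos (div_pos (by linarith) (by positivity))
    positivity
  set ε : ℝ := E ^ (1 / q) with hε_def
  have hε : 0 < ε := Real.rpow_pos_of_pos hE _
  have hεq : ε ^ q = E := by
    rw [hε_def, ← Real.rpow_mul hE.le, one_div_mul_cancel hq0.ne', Real.rpow_one]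
  -- continuity: find γ' such that ‖g' u - g' xb‖ < ε near xb
  have hc : ContinuousWithinAt g' (ball xb δ) xb := hcont xb (mem_ball_self hδ)
  rw [Metric.continuousWithinAt_iff] at hc
  obtain ⟨γ', hγ', hγ'conc⟩ := hc ε hε
  refine ⟨min γ' δ / 2, by positivity, min γ₀ 1, lt_min hγ₀ one_pos, ?_⟩
  intro u hu x hx w hw
  set t : ℝ := ‖x - xb‖ with ht_def
  have ht0 : 0 ≤ t := norm_nonneg _
  have ht1 : t ≤ 1 := by
    have := mem_closedBall_iff_norm.mp hx
    exact le_trans this (min_le_right _ _)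
  have hxγ₀ : x ∈ closedBall xb γ₀ := by
    have := mem_closedBall_iff_norm.mp hx
    exact mem_closedBall_iff_norm.mpr (le_trans this (min_le_left _ _))
  set B : ℝ := ‖g xb + (g' u) (x - xb) + w - yb‖ with hB_def
  have hB0 : 0 ≤ B := norm_nonneg _
  -- bound on operator difference
  have hud : ‖u - xb‖ ≤ min γ' δ / 2 := mem_closedBall_iff_norm.mp hu
  have huδ : u ∈ ball xb δ := by
    rw [mem_ball_iff_norm]
    calc ‖u - xb‖ ≤ min γ' δ / 2 := hud
      _ < δ := by have := min_le_right γ' δ; linarith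
  have hop : ‖g' u - g' xb‖ < ε := by
    have : dist (g' u) (g' xb) < ε := hγ'conc huδ (by
      rw [dist_eq_norm]
      calc ‖u - xb‖ ≤ min γ' δ / 2 := hud
        _ < γ' := by have := min_le_left γ' δ; linarith)
    rwa [dist_eq_norm] at this
  have hAB : ‖g xb + (g' xb) (x - xb) + w - yb‖ ≤ B + ε * t := by
    have h1 : g xb + (g' xb) (x - xb) + w - yb
        = (g xb + (g' u) (x - xb) + w - yb) + ((g' xb - g' u) (x - xb)) := by
      simp [ContinuousLinearMap.sub_apply]; abel
    rw [h1]
    refine le_trans (norm_add_le _ _) (add_le_add (le_refl _) ?_)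
    calc ‖(g' xb - g' u) (x - xb)‖ ≤ ‖g' xb - g' u‖ * t := (g' xb - g' u).le_opNorm _
      _ ≤ ε * t := by
          apply mul_le_mul_of_nonneg_right _ ht0
          rw [norm_sub_rev]; exact hop.le
  have h1 : t ≤ κ * ‖g xb + (g' xb) (x - xb) + w - yb‖ ^ q := hsub x hxγ₀ w hw
  have h2 : ‖g xb + (g' xb) (x - xb) + w - yb‖ ^ q ≤ (B + ε * t) ^ q :=
    Real.rpow_le_rpow (norm_nonneg _) hAB hq0.le
  have h3 : (B + ε * t) ^ q ≤ ρ ^ q * B ^ q + (ρ / (ρ - 1)) ^ q * (ε * t) ^ q :=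
    rpow_add_le_aux hB0 (by positivity) hρ1 hq0.le
  have h4 : (ε * t) ^ q = E * t ^ q := by
    rw [Real.mul_rpow hε.le ht0, hεq]
  have h5 : t ^ q ≤ t := by
    rcases eq_or_lt_of_le ht0 with h | h
    · rw [← h, Real.zero_rpow hq0.ne']
    · calc t ^ q ≤ t ^ (1 : ℝ) := Real.rpow_le_rpow_of_exponent_ge h ht1 hq
        _ = t := Real.rpow_one t
  -- cancellation: (ρ/(ρ-1))^q * E = (r-1)/(2rκ)
  have hcancel : (ρ / (ρ - 1)) ^ q * E = (r - 1) / (2 * r * κ) := by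
    rw [hE_def]
    rw [mul_comm ((r - 1) / (2 * r * κ)) _, ← mul_assoc, ← Real.mul_rpow (by positivity) (by positivity)]
    have : ρ / (ρ - 1) * ((ρ - 1) / ρ) = 1 := by field_simp
    rw [this, Real.one_rpow, one_mul]
  -- combine
  have hmain : t ≤ κ * ((1 + r) / 2) * B ^ q + (r - 1) / (2 * r) * t := by
    have c1 : t ≤ κ * (ρ ^ q * B ^ q + (ρ / (ρ - 1)) ^ q * (ε * t) ^ q) := by
      calc t ≤ κ * ‖g xb + (g' xb) (x - xb) + w - yb‖ ^ q := h1
        _ ≤ κ * (B + ε * t) ^ q := by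
            exact mul_le_mul_of_nonneg_left h2 hκ.le
        _ ≤ _ := mul_le_mul_of_nonneg_left h3 hκ.le
    have c2 : (ρ / (ρ - 1)) ^ q * (ε * t) ^ q ≤ (r - 1) / (2 * r * κ) * t := by
      rw [h4, ← mul_assoc, hcancel]
      exact mul_le_mul_of_nonneg_left h5 (div_nonneg (by linarith) (by positivity))
    have c3 : κ * ((r - 1) / (2 * r * κ)) = (r - 1) / (2 * r) := by
      field_simp
    calc t ≤ κ * (ρ ^ q * B ^ q + (ρ / (ρ - 1)) ^ q * (ε * t) ^ q) := c1
      _ ≤ κ * (ρ ^ q * B ^ q + (r - 1) / (2 * r * κ) * t) := by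
          apply mul_le_mul_of_nonneg_left _ hκ.le
          exact add_le_add (le_refl _) c2
      _ = κ * (ρ ^ q * B ^ q) + κ * ((r - 1) / (2 * r * κ)) * t := by ring
      _ = κ * ((1 + r) / 2) * B ^ q + (r - 1) / (2 * r) * t := by rw [hρq, c3]; ring
  -- conclude: t * (r+1)/(2r) ≤ κ(1+r)/2 * B^q, so t ≤ κ r B^q = lam B^q
  have hBq : 0 ≤ B ^ q := by positivity
  have hlamr : lam = κ * r := by rw [hr_def, mul_comm, div_mul_cancel₀ lam hκ.ne']
  rw [hlamr]
  have hr0 : 0 < r := by linarith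
  have hrne : r ≠ 0 := hr0.ne'
  have hr1ne : r + 1 ≠ 0 := by positivity
  have key : t * ((r + 1) / (2 * r)) ≤ κ * ((1 + r) / 2) * B ^ q := by
    have h6 : (r + 1) / (2 * r) = 1 - (r - 1) / (2 * r) := by field_simp; ring
    rw [h6]; linarith
  have h7 := mul_le_mul_of_nonneg_right key (le_of_lt (show (0:ℝ) < 2 * r / (r + 1) by positivity))
  calc t = t * ((r + 1) / (2 * r)) * (2 * r / (r + 1)) := by field_simp
    _ ≤ κ * ((1 + r) / 2) * B ^ q * (2 * r / (r + 1)) := h7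
    _ = κ * r * B ^ q := by field_simp; ring
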